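/- Let Ω be the curvature matrix of a connection ∇ on an even-rank oriented vector bundle E with metric g, computed in local g-orthonormal positively oriented frames. Then the local expressions (2π)^{-n} Pf((Ω - Ωᵀ)/2) agree on overlaps of such frames (whose transition matrices lie in SO(n)), hence define a global differential form on the base manifold. -/

import Mathlib

open Matrix
/-- Index of the first element of the `i`-th pair. -/
def pairLo {m : ℕ} (i : Fin m) : Fin (2 * m) := ⟨2 * i.1, by omega⟩

/-- Index of the second element of the `i`-th pair. -/
def pairHi {m : ℕ} (i : Fin m) : Fin (2 * m) := ⟨2 * i.1 + 1, by omega⟩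

/-- Permutations of `Fin (2m)` encoding partitions of `{1,…,2m}` into pairs
(each pair listed increasingly, pairs listed by increasing first element). -/
noncomputable def pairPartitions (m : ℕ) : Finset (Equiv.Perm (Fin (2 * m))) :=
  Finset.univ.filter fun σ =>
    (∀ i : Fin m, σ (pairLo i) < σ (pairHi i)) ∧
      ∀ i j : Fin m, i < j → σ (pairLo i) < σ (pairLo j)

/-- The Pfaffian of a `2m × 2m` matrix, as the signed sum over pair partitions
`Pf(A) = Σ_α sgn(α) a_{i₁j₁}⋯a_{iₘjₘ}` (products taken in order, so that the
definition also makes sense with entries in a possibly noncommutative ring,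
e.g. even-degree differential forms). -/
noncomputable def pfaffian {R : Type*} [Ring R] {m : ℕ}
    (A : Matrix (Fin (2 * m)) (Fin (2 * m)) R) : R :=
  ∑ σ ∈ pairPartitions m,
    ((Equiv.Perm.sign σ : ℤˣ) : ℤ) • (List.ofFn fun i : Fin m => A (σ (pairLo i)) (σ (pairHi i))).prod


namespace EulerAux
open Equiv Finset

variable {m : ℕ}

lemma pairLo_lt_pairHi (i : Fin m) : pairLo i < pairHi i := by
  simp [pairLo, pairHi, Fin.lt_def]

/-- `Fin (2m)` is pairs. -/
def eP (m : ℕ) : Fin (2 * m) ≃ Fin m × Bool where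
  toFun x := (⟨x.1 / 2, by omega⟩, decide (x.1 % 2 = 1))
  invFun p := if p.2 then pairHi p.1 else pairLo p.1
  left_inv x := by
    rcases x with ⟨v, hv⟩
    by_cases h : v % 2 = 1 <;>
      simp [h, pairLo, pairHi, Fin.ext_iff] <;> omega
  right_inv p := by
    rcases p with ⟨⟨i, hi⟩, b⟩
    cases b <;> simp [pairLo, pairHi, Prod.ext_iff, Fin.ext_iff] <;> omega

@[simp] lemma eP_pairLo (i : Fin m) : eP m (pairLo i) = (i, false) := by
  simp [eP, pairLo, Prod.ext_iff, Fin.ext_iff] <;> omega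

@[simp] lemma eP_pairHi (i : Fin m) : eP m (pairHi i) = (i, true) := by
  simp [eP, pairHi, Prod.ext_iff, Fin.ext_iff] <;> omega

@[simp] lemma eP_symm_false (i : Fin m) : (eP m).symm (i, false) = pairLo i := rfl
@[simp] lemma eP_symm_true (i : Fin m) : (eP m).symm (i, true) = pairHi i := rfl

lemma prod_pair {M : Type*} [CommMonoid M] (f : Fin (2 * m) → M) :
    ∏ x, f x = ∏ i : Fin m, f (pairLo i) * f (pairHi i) := by
  rw [← (eP m).symm.prod_comp f, Fintype.prod_prod_type]
  refine Finset.prod_congr rfl fun i _ => ?_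
  rw [Fintype.prod_bool, mul_comm, eP_symm_false, eP_symm_true]


variable {R : Type*} [CommRing R]

/-- Pfaffian-type sum over *all* permutations. -/
noncomputable def pfSum (A : Matrix (Fin (2 * m)) (Fin (2 * m)) R) : R :=
  ∑ σ : Equiv.Perm (Fin (2 * m)),
    ((Equiv.Perm.sign σ : ℤ) : R) * ∏ i : Fin m, A (σ (pairLo i)) (σ (pairHi i))

/-- Functions on `Fin 2m` as pairs of functions. -/
def eF (m : ℕ) (β : Type*) : (Fin (2 * m) → β) ≃ (Fin m → β × β) where
  toFun τ i := (τ (pairLo i), τ (pairHi i))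
  invFun f x := if (eP m x).2 then (f (eP m x).1).2 else (f (eP m x).1).1
  left_inv τ := by
    funext x
    have hx : x = (eP m).symm (eP m x) := ((eP m).symm_apply_apply x).symm
    rcases hep : eP m x with ⟨i, b⟩
    rw [hx, hep]
    cases b <;> simp
  right_inv f := by
    funext i
    simp

lemma entry_expand (U A : Matrix (Fin (2 * m)) (Fin (2 * m)) R) (x y : Fin (2 * m)) :
    (Uᵀ * A * U) x y = ∑ kl : Fin (2 * m) × Fin (2 * m), U kl.1 x * A kl.1 kl.2 * U kl.2 y := by
  rw [Matrix.mul_apply]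
  simp_rw [Matrix.mul_apply, Matrix.transpose_apply, Finset.sum_mul]
  rw [Finset.sum_comm, ← Finset.univ_product_univ, Finset.sum_product]

lemma pfSum_conj (U A : Matrix (Fin (2 * m)) (Fin (2 * m)) R) :
    pfSum (Uᵀ * A * U) = U.det * pfSum A := by
  classical
  calc
    pfSum (Uᵀ * A * U)
        = ∑ σ : Equiv.Perm (Fin (2 * m)), ((Equiv.Perm.sign σ : ℤ) : R) *
            ∑ f : Fin m → Fin (2 * m) × Fin (2 * m), ∏ i : Fin m,
              (U (f i).1 (σ (pairLo i)) * A (f i).1 (f i).2 * U (f i).2 (σ (pairHi i))) := by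
        unfold pfSum
        refine Finset.sum_congr rfl fun σ _ => ?_
        congr 1
        simp_rw [entry_expand]
        rw [Finset.prod_univ_sum]
        simp [Fintype.piFinset_univ]
    _ = ∑ τ : Fin (2 * m) → Fin (2 * m),
          (∏ i : Fin m, A (τ (pairLo i)) (τ (pairHi i))) *
            ∑ σ : Equiv.Perm (Fin (2 * m)), ((Equiv.Perm.sign σ : ℤ) : R) *
              ∏ x : Fin (2 * m), U (τ x) (σ x) := by
        simp_rw [Finset.mul_sum]
        rw [Finset.sum_comm]
        rw [← Equiv.sum_comp (eF m (Fin (2 * m))) fun f => ∑ σ : Equiv.Perm (Fin (2 * m)), _]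
        refine Finset.sum_congr rfl fun τ _ => ?_
        refine Finset.sum_congr rfl fun σ _ => ?_
        rw [eF]
        simp only [Equiv.coe_fn_mk]
        rw [prod_pair (fun x => U (τ x) (σ x))]
        have : ∏ i : Fin m,
            (U (τ (pairLo i)) (σ (pairLo i)) * A (τ (pairLo i)) (τ (pairHi i)) *
              U (τ (pairHi i)) (σ (pairHi i)))
            = (∏ i : Fin m, A (τ (pairLo i)) (τ (pairHi i))) *
              ∏ i : Fin m, (U (τ (pairLo i)) (σ (pairLo i)) * U (τ (pairHi i)) (σ (pairHi i))) := by
          rw [← Finset.prod_mul_distrib]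
          exact Finset.prod_congr rfl fun i _ => by ring
        rw [this]
        ring
    _ = ∑ τ : Fin (2 * m) → Fin (2 * m),
          (∏ i : Fin m, A (τ (pairLo i)) (τ (pairHi i))) * (Uᵀ.submatrix id τ).det := by
        refine Finset.sum_congr rfl fun τ _ => ?_
        congr 1
        rw [Matrix.det_apply]
        refine Finset.sum_congr rfl fun (σ : Equiv.Perm (Fin (2 * m))) _ => ?_
        rw [Units.smul_def, zsmul_eq_mul]
        rfl
    _ = U.det * pfSum A := by
        rw [← Finset.sum_filter_add_sum_filter_not Finset.univ (fun τ => Function.Bijective τ)]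
        have hzero : ∀ τ ∈ Finset.univ.filter (fun τ : Fin (2 * m) → Fin (2 * m) =>
            ¬ Function.Bijective τ),
            (∏ i : Fin m, A (τ (pairLo i)) (τ (pairHi i))) * (Uᵀ.submatrix id τ).det = 0 := by
          intro τ hτ
          simp only [Finset.mem_filter] at hτ
          have hni : ¬ Function.Injective τ := fun h => hτ.2 (Finite.injective_iff_bijective.mp h)
          rw [Function.not_injective_iff] at hni
          obtain ⟨b₁, b₂, hb, hne⟩ := hni
          rw [Matrix.det_zero_of_column_eq hne fun k => by simp [hb], mul_zero]
        rw [Finset.sum_eq_zero hzero, add_zero]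
        have hbij : ∑ τ ∈ Finset.univ.filter (fun τ : Fin (2 * m) → Fin (2 * m) =>
              Function.Bijective τ),
              (∏ i : Fin m, A (τ (pairLo i)) (τ (pairHi i))) * (Uᵀ.submatrix id τ).det
            = ∑ e : Equiv.Perm (Fin (2 * m)),
              (∏ i : Fin m, A (e (pairLo i)) (e (pairHi i))) * (Uᵀ.submatrix id ⇑e).det := by
          refine (Finset.sum_bij
            (fun (e : Equiv.Perm (Fin (2 * m))) (_ : e ∈ Finset.univ) =>
              (e : Fin (2 * m) → Fin (2 * m)))
            (fun e _ => Finset.mem_filter.mpr ⟨Finset.mem_univ _, e.bijective⟩)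
            (fun e₁ _ e₂ _ h => Equiv.coe_fn_injective h)
            (fun τ hτ => ⟨Equiv.ofBijective τ (Finset.mem_filter.mp hτ).2, Finset.mem_univ _, rfl⟩)
            (fun e _ => rfl)).symm
        rw [hbij, pfSum, Finset.mul_sum]
        refine Finset.sum_congr rfl fun e _ => ?_
        rw [Matrix.det_permute', Matrix.det_transpose]
        push_cast
        ring
/-- The "hyperoctahedral" permutation: permute the pairs by `π` and swap inside pair `i`
when `ε i` is `true`. -/
def hswap (ε : Fin m → Bool) (π : Equiv.Perm (Fin m)) : Equiv.Perm (Fin (2 * m)) :=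
  ((eP m).symm.permCongr
    ((Equiv.prodCongrRight fun i => if ε i then Equiv.swap false true else Equiv.refl Bool).trans
      (Equiv.prodCongrLeft fun _ : Bool => π)))

lemma hswap_pairLo (ε : Fin m → Bool) (π : Equiv.Perm (Fin m)) (i : Fin m) :
    hswap ε π (pairLo i) = if ε i then pairHi (π i) else pairLo (π i) := by
  simp only [hswap, Equiv.permCongr_apply, Equiv.symm_symm, eP_pairLo, Equiv.trans_apply,
    Equiv.prodCongrRight_apply, Equiv.prodCongrLeft_apply]
  cases h : ε i <;> simp [h]

lemma hswap_pairHi (ε : Fin m → Bool) (π : Equiv.Perm (Fin m)) (i : Fin m) :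
    hswap ε π (pairHi i) = if ε i then pairLo (π i) else pairHi (π i) := by
  simp only [hswap, Equiv.permCongr_apply, Equiv.symm_symm, eP_pairHi, Equiv.trans_apply,
    Equiv.prodCongrRight_apply, Equiv.prodCongrLeft_apply]
  cases h : ε i <;> simp [h]

lemma sign_hswap (ε : Fin m → Bool) (π : Equiv.Perm (Fin m)) :
    (Equiv.Perm.sign (hswap ε π) : ℤ) = ∏ i : Fin m, (if ε i then (-1 : ℤ) else 1) := by
  have h1 : Equiv.Perm.sign (hswap ε π)
      = Equiv.Perm.sign
        ((Equiv.prodCongrRight fun i => if ε i then Equiv.swap false true else Equiv.refl Bool).trans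
          (Equiv.prodCongrLeft fun _ : Bool => π)) := Equiv.Perm.sign_permCongr _ _
  rw [h1]
  have h2 : ∀ (f g : Equiv.Perm (Fin m × Bool)), f.trans g = g * f := fun _ _ => rfl
  rw [h2, _root_.map_mul, Equiv.Perm.sign_prodCongrLeft, Equiv.Perm.sign_prodCongrRight]
  have h3 : (∏ _b : Bool, Equiv.Perm.sign π) = 1 := by
    rw [Finset.prod_const, Finset.card_univ, Fintype.card_bool, Int.units_sq]
  rw [h3, one_mul]
  push_cast
  refine Finset.prod_congr rfl fun i _ => ?_
  cases h : ε i <;> simp [h]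
variable (σ : Equiv.Perm (Fin (2 * m)))

/-- smaller element of the `i`-th pair of `σ`. -/
noncomputable def aOf (i : Fin m) : Fin (2 * m) := min (σ (pairLo i)) (σ (pairHi i))
/-- larger element of the `i`-th pair of `σ`. -/
noncomputable def bOf (i : Fin m) : Fin (2 * m) := max (σ (pairLo i)) (σ (pairHi i))
/-- whether the `i`-th pair of `σ` is decreasing. -/
def epsOf (i : Fin m) : Bool := decide (σ (pairHi i) < σ (pairLo i))
/-- the permutation sorting the pairs of `σ` by smallest element. -/
noncomputable def piOf : Equiv.Perm (Fin m) := (Tuple.sort (aOf σ))⁻¹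
/-- normalized pair partition underlying `σ`. -/
noncomputable def pOf : Equiv.Perm (Fin (2 * m)) := σ * (hswap (epsOf σ) (piOf σ))⁻¹

lemma sigma_pair_ne (i : Fin m) : σ (pairLo i) ≠ σ (pairHi i) :=
  fun h => (pairLo_lt_pairHi i).ne (σ.injective h)

lemma aOf_injective : Function.Injective (aOf σ) := by
  have key : ∀ i, (eP m (σ⁻¹ (aOf σ i))).1 = i := by
    intro i
    rcases min_cases (σ (pairLo i)) (σ (pairHi i)) with ⟨h, _⟩ | ⟨h, _⟩ <;>
      · unfold aOf
        rw [h, Equiv.Perm.inv_def, Equiv.symm_apply_apply]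
        simp
  intro i j h
  have hi := key i
  rw [h, key j] at hi
  exact hi.symm

lemma hswap_inv_pairLo (ε : Fin m → Bool) (π : Equiv.Perm (Fin m)) (j : Fin m) :
    (hswap ε π)⁻¹ (pairLo j) =
      if ε (π⁻¹ j) then pairHi (π⁻¹ j) else pairLo (π⁻¹ j) := by
  have h0 : ((hswap ε π)⁻¹ : Equiv.Perm (Fin (2 * m))) (pairLo j) = (hswap ε π).symm (pairLo j) :=
    rfl
  rw [h0, Equiv.symm_apply_eq]
  cases h : ε (π⁻¹ j) <;> simp [Equiv.Perm.inv_def] at h <;> simp [h, hswap_pairLo, hswap_pairHi]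

lemma hswap_inv_pairHi (ε : Fin m → Bool) (π : Equiv.Perm (Fin m)) (j : Fin m) :
    (hswap ε π)⁻¹ (pairHi j) =
      if ε (π⁻¹ j) then pairLo (π⁻¹ j) else pairHi (π⁻¹ j) := by
  have h0 : ((hswap ε π)⁻¹ : Equiv.Perm (Fin (2 * m))) (pairHi j) = (hswap ε π).symm (pairHi j) :=
    rfl
  rw [h0, Equiv.symm_apply_eq]
  cases h : ε (π⁻¹ j) <;> simp [Equiv.Perm.inv_def] at h <;> simp [h, hswap_pairLo, hswap_pairHi]

lemma pOf_pairLo (j : Fin m) : pOf σ (pairLo j) = aOf σ (Tuple.sort (aOf σ) j) := by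
  have hπ : (piOf σ)⁻¹ j = Tuple.sort (aOf σ) j := by rw [piOf, inv_inv]
  rw [pOf, Equiv.Perm.mul_apply, hswap_inv_pairLo, hπ]
  set i := Tuple.sort (aOf σ) j with hi
  cases h : epsOf σ i
  · simp only [h, Bool.false_eq_true, if_false]
    rw [epsOf, decide_eq_false_iff_not, not_lt] at h
    exact (min_eq_left h).symm
  · simp only [h, if_true]
    rw [epsOf, decide_eq_true_eq] at h
    exact (min_eq_right h.le).symm

lemma pOf_pairHi (j : Fin m) : pOf σ (pairHi j) = bOf σ (Tuple.sort (aOf σ) j) := by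
  have hπ : (piOf σ)⁻¹ j = Tuple.sort (aOf σ) j := by rw [piOf, inv_inv]
  rw [pOf, Equiv.Perm.mul_apply, hswap_inv_pairHi, hπ]
  set i := Tuple.sort (aOf σ) j with hi
  cases h : epsOf σ i
  · simp only [h, Bool.false_eq_true, if_false]
    rw [epsOf, decide_eq_false_iff_not, not_lt] at h
    exact (max_eq_right h).symm
  · simp only [h, if_true]
    rw [epsOf, decide_eq_true_eq] at h
    exact (max_eq_left h.le).symm

lemma pOf_mem : pOf σ ∈ pairPartitions m := by
  rw [pairPartitions, Finset.mem_filter]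
  have hs : StrictMono (aOf σ ∘ Tuple.sort (aOf σ)) :=
    (Tuple.monotone_sort (aOf σ)).strictMono_of_injective
      ((aOf_injective σ).comp (Tuple.sort (aOf σ)).injective)
  refine ⟨Finset.mem_univ _, fun i => ?_, fun i j hij => ?_⟩
  · rw [pOf_pairLo, pOf_pairHi]
    exact min_lt_max.mpr (sigma_pair_ne σ _)
  · rw [pOf_pairLo, pOf_pairLo]
    exact hs hij
/-- Decomposition of a permutation into (pair partition, swaps, pair permutation). -/
noncomputable def ppEquiv (m : ℕ) :
    ({p : Equiv.Perm (Fin (2 * m)) // p ∈ pairPartitions m} ×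
      ((Fin m → Bool) × Equiv.Perm (Fin m))) ≃ Equiv.Perm (Fin (2 * m)) where
  toFun x := x.1.1 * hswap x.2.1 x.2.2
  invFun σ := (⟨pOf σ, pOf_mem σ⟩, epsOf σ, piOf σ)
  right_inv σ := by
    show pOf σ * hswap (epsOf σ) (piOf σ) = σ
    rw [pOf, inv_mul_cancel_right]
  left_inv := by
    rintro ⟨⟨p, hp⟩, ε, π⟩
    rw [pairPartitions, Finset.mem_filter] at hp
    obtain ⟨-, hp1, hp2⟩ := hp
    set σ := p * hswap ε π with hσ
    have hLo : ∀ i, σ (pairLo i) = if ε i then p (pairHi (π i)) else p (pairLo (π i)) := by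
      intro i
      rw [hσ, Equiv.Perm.mul_apply, hswap_pairLo]
      cases h : ε i <;> simp [h]
    have hHi : ∀ i, σ (pairHi i) = if ε i then p (pairLo (π i)) else p (pairHi (π i)) := by
      intro i
      rw [hσ, Equiv.Perm.mul_apply, hswap_pairHi]
      cases h : ε i <;> simp [h]
    have heps : epsOf σ = ε := by
      funext i
      rw [epsOf, hLo, hHi]
      cases h : ε i <;> simp [h]
      · exact (hp1 (π i)).le
      · exact hp1 (π i)
    have haOf : aOf σ = fun i => p (pairLo (π i)) := by
      funext i
      rw [aOf, hLo, hHi]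
      cases h : ε i <;> simp [h]
      · exact (hp1 (π i)).le
      · exact (hp1 (π i)).le
    have hplo_mono : StrictMono (fun j => p (pairLo j)) := fun i j hij => hp2 i j hij
    have hsort : Tuple.sort (aOf σ) = π⁻¹ := by
      symm
      rw [Tuple.eq_sort_iff]
      constructor
      · intro i j hij
        simp only [haOf, Function.comp_apply, Equiv.Perm.inv_def, Equiv.apply_symm_apply]
        exact (hplo_mono.monotone : Monotone _) hij
      · intro i j hij heq
        exfalso
        simp only [haOf, Equiv.Perm.inv_def, Equiv.apply_symm_apply] at heq
        have : i = j := hplo_mono.injective (by simpa using heq)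
        omega
    have hpi : piOf σ = π := by rw [piOf, hsort, inv_inv]
    have hpOf : pOf σ = p := by
      rw [pOf, heps, hpi, hσ, mul_inv_cancel_right]
    exact Prod.ext (Subtype.ext hpOf) (Prod.ext heps hpi)
lemma key_term (A : Matrix (Fin (2 * m)) (Fin (2 * m)) R)
    (hA : ∀ x y, A y x = - A x y)
    (p : Equiv.Perm (Fin (2 * m))) (hp : p ∈ pairPartitions m)
    (ε : Fin m → Bool) (π : Equiv.Perm (Fin m)) :
    ((Equiv.Perm.sign (p * hswap ε π) : ℤ) : R) *
        ∏ i : Fin m, A ((p * hswap ε π) (pairLo i)) ((p * hswap ε π) (pairHi i))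
      = ((Equiv.Perm.sign p : ℤ) : R) * ∏ i : Fin m, A (p (pairLo i)) (p (pairHi i)) := by
  have hprod : ∏ i : Fin m, A ((p * hswap ε π) (pairLo i)) ((p * hswap ε π) (pairHi i))
      = (∏ i : Fin m, (if ε i then (-1 : R) else 1)) *
        ∏ i : Fin m, A (p (pairLo i)) (p (pairHi i)) := by
    calc ∏ i : Fin m, A ((p * hswap ε π) (pairLo i)) ((p * hswap ε π) (pairHi i))
        = ∏ i : Fin m,
            ((if ε i then (-1 : R) else 1) * A (p (pairLo (π i))) (p (pairHi (π i)))) := by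
          refine Finset.prod_congr rfl fun i _ => ?_
          rw [Equiv.Perm.mul_apply, Equiv.Perm.mul_apply, hswap_pairLo, hswap_pairHi]
          cases h : ε i
          · simp [h]
          · simp only [h, if_true, one_mul]
            rw [hA]
            ring
      _ = (∏ i : Fin m, (if ε i then (-1 : R) else 1)) *
            ∏ i : Fin m, A (p (pairLo (π i))) (p (pairHi (π i))) := Finset.prod_mul_distrib
      _ = (∏ i : Fin m, (if ε i then (-1 : R) else 1)) *
            ∏ j : Fin m, A (p (pairLo j)) (p (pairHi j)) := by
          rw [Equiv.prod_comp π fun j => A (p (pairLo j)) (p (pairHi j))]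
  have hsign : ((Equiv.Perm.sign (p * hswap ε π) : ℤ) : R)
      = ((Equiv.Perm.sign p : ℤ) : R) * ∏ i : Fin m, (if ε i then (-1 : R) else 1) := by
    rw [_root_.map_mul]
    push_cast
    rw [sign_hswap]
    push_cast
    norm_cast
  rw [hprod, hsign]
  have hsq : (∏ i : Fin m, (if ε i then (-1 : R) else 1)) *
      (∏ i : Fin m, (if ε i then (-1 : R) else 1)) = 1 := by
    rw [← Finset.prod_mul_distrib]
    rw [Finset.prod_eq_one fun i _ => by cases h : ε i <;> simp [h]]
  calc ((Equiv.Perm.sign p : ℤ) : R) * (∏ i : Fin m, (if ε i then (-1 : R) else 1)) *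
        ((∏ i : Fin m, (if ε i then (-1 : R) else 1)) *
          ∏ i : Fin m, A (p (pairLo i)) (p (pairHi i)))
      = ((Equiv.Perm.sign p : ℤ) : R) *
          ((∏ i : Fin m, (if ε i then (-1 : R) else 1)) *
            (∏ i : Fin m, (if ε i then (-1 : R) else 1))) *
          ∏ i : Fin m, A (p (pairLo i)) (p (pairHi i)) := by ring
    _ = _ := by rw [hsq]; ring

lemma pfSum_eq_pfaffian (A : Matrix (Fin (2 * m)) (Fin (2 * m)) R)
    (hA : ∀ x y, A y x = - A x y) :
    pfSum A = (2 ^ m * Nat.factorial m) • pfaffian A := by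
  classical
  rw [pfSum, ← Equiv.sum_comp (ppEquiv m) fun σ =>
    ((Equiv.Perm.sign σ : ℤ) : R) * ∏ i : Fin m, A (σ (pairLo i)) (σ (pairHi i))]
  rw [Fintype.sum_prod_type]
  have hinner : ∀ p : {p : Equiv.Perm (Fin (2 * m)) // p ∈ pairPartitions m},
      ∑ x : (Fin m → Bool) × Equiv.Perm (Fin m),
        ((Equiv.Perm.sign (ppEquiv m (p, x)) : ℤ) : R) *
          ∏ i : Fin m, A ((ppEquiv m (p, x)) (pairLo i)) ((ppEquiv m (p, x)) (pairHi i))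
      = (2 ^ m * Nat.factorial m) •
          (((Equiv.Perm.sign p.1 : ℤ) : R) * ∏ i : Fin m, A (p.1 (pairLo i)) (p.1 (pairHi i))) := by
    intro p
    have : ∀ x : (Fin m → Bool) × Equiv.Perm (Fin m),
        ((Equiv.Perm.sign (ppEquiv m (p, x)) : ℤ) : R) *
          ∏ i : Fin m, A ((ppEquiv m (p, x)) (pairLo i)) ((ppEquiv m (p, x)) (pairHi i))
        = ((Equiv.Perm.sign p.1 : ℤ) : R) * ∏ i : Fin m, A (p.1 (pairLo i)) (p.1 (pairHi i)) :=
      fun x => key_term A hA p.1 p.2 x.1 x.2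
    rw [Finset.sum_congr rfl fun x _ => this x, Finset.sum_const, Finset.card_univ]
    congr 1
    rw [Fintype.card_prod, Fintype.card_fun, Fintype.card_bool, Fintype.card_perm,
      Fintype.card_fin]
  rw [Finset.sum_congr rfl fun p _ => hinner p, ← Finset.smul_sum]
  congr 1
  rw [pfaffian, ← Finset.sum_coe_sort (pairPartitions m)]
  refine Finset.sum_congr rfl fun p _ => ?_
  rw [List.prod_ofFn, zsmul_eq_mul]
end EulerAux

/-- The local expression `(2π)^{-n} Pf((Ω - Ωᵀ)/2)` (with `n = 2m`) for the Euler form of an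
arbitrary linear connection, computed in positively oriented `g`-orthonormal frames, is invariant
under a change of frame: if the curvature matrix transforms as `Ω ↦ Uᵀ Ω U` with `U ∈ SO(2m)`
(entries of all matrices lying in the commutative algebra of even-degree differential forms),
the two local expressions agree, hence they glue to a global form. -/
theorem euler_form_well_defined {R : Type*} [CommRing R] [Algebra ℝ R] {m : ℕ}
    (Ω Ω' U : Matrix (Fin (2 * m)) (Fin (2 * m)) R)
    (hU : Uᵀ * U = 1)
    (hdet : U.det = 1)
    (hΩ' : Ω' = Uᵀ * Ω * U) :
    (((2 * Real.pi) ^ (2 * m))⁻¹ : ℝ) • pfaffian (((2 : ℝ)⁻¹) • (Ω' - Ω'ᵀ)) =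
      (((2 * Real.pi) ^ (2 * m))⁻¹ : ℝ) • pfaffian (((2 : ℝ)⁻¹) • (Ω - Ωᵀ)) := by
  classical
  set A : Matrix (Fin (2 * m)) (Fin (2 * m)) R := ((2 : ℝ)⁻¹) • (Ω - Ωᵀ) with hA
  set A' : Matrix (Fin (2 * m)) (Fin (2 * m)) R := ((2 : ℝ)⁻¹) • (Ω' - Ω'ᵀ) with hA'
  have hconj : A' = Uᵀ * A * U := by
    rw [hA', hA, hΩ']
    have ht : (Uᵀ * Ω * U)ᵀ = Uᵀ * Ωᵀ * U := by
      rw [Matrix.transpose_mul, Matrix.transpose_mul, Matrix.transpose_transpose,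
        Matrix.mul_assoc]
    rw [ht]
    have hsub : Uᵀ * Ω * U - Uᵀ * Ωᵀ * U = Uᵀ * (Ω - Ωᵀ) * U := by
      rw [Matrix.mul_sub, Matrix.sub_mul]
    rw [hsub, Matrix.mul_smul, Matrix.smul_mul]
  have hanti : ∀ (B : Matrix (Fin (2 * m)) (Fin (2 * m)) R) (x y : Fin (2 * m)),
      (((2 : ℝ)⁻¹) • (B - Bᵀ)) y x = - (((2 : ℝ)⁻¹) • (B - Bᵀ)) x y := by
    intro B x y
    simp only [Matrix.smul_apply, Matrix.sub_apply, Matrix.transpose_apply]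
    rw [← smul_neg, neg_sub]
  have h2 : EulerAux.pfSum A = (2 ^ m * Nat.factorial m) • pfaffian A :=
    EulerAux.pfSum_eq_pfaffian A (hanti Ω)
  have h3 : EulerAux.pfSum A' = (2 ^ m * Nat.factorial m) • pfaffian A' :=
    EulerAux.pfSum_eq_pfaffian A' (hanti Ω')
  have h1 : EulerAux.pfSum A' = EulerAux.pfSum A := by
    rw [hconj, EulerAux.pfSum_conj, hdet, one_mul]
  have hsm : (2 ^ m * Nat.factorial m) • pfaffian A' = (2 ^ m * Nat.factorial m) • pfaffian A := by
    rw [← h2, ← h3, h1]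
  have hNpos : ((2 ^ m * Nat.factorial m : ℕ) : ℝ) ≠ 0 := by
    positivity
  have hpf : pfaffian A' = pfaffian A := by
    have hcast : ∀ x : R, ((2 ^ m * Nat.factorial m : ℕ) : ℝ) • x = (2 ^ m * Nat.factorial m) • x :=
      fun x => Nat.cast_smul_eq_nsmul ℝ _ x
    have := congrArg (fun x : R => (((2 ^ m * Nat.factorial m : ℕ) : ℝ))⁻¹ • x) hsm
    have hmm : ((↑(m.factorial) : ℝ))⁻¹ * ((2 : ℝ) ^ m)⁻¹ * (2 ^ m * (m.factorial : ℝ)) = 1 := by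
      field_simp
    simpa [← hcast, smul_smul, hmm] using this
  rw [hpf]
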